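/- arXiv:1511.03898 — 2 statements merged into one kernel-verified Lean document; each statement's English description precedes it below -/
import Mathlib

section
/- Fix an integer k ≥ 1 and a real α > 0, and for λ > 0 let R_λ^{−1} be the bounded diagonal operator on ℓ²(ℕ,ℂ) with R_λ^{−1}|n⟩ = (1 + λ(n(n−1)⋯(n−k+1) + α^{2k}))^{−1}|n⟩. Then there exists c > 0 such that for all λ > 0 and all ψ ∈ ℓ²(ℕ,ℂ), λ²α^{2k} ‖((a†)^k + a^k)(R_λ^{−1}ψ)‖² ≤ c·λ·‖ψ‖². In particular, for 0 < λ < 1/c the operator λα^k((a†)^k + a^k)R_λ^{−1} extends to a bounded operator on ℓ²(ℕ,ℂ) of operator norm strictly less than one. -/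
noncomputable section

open scoped BigOperators ComplexConjugate

local notation "⟪" x ", " y "⟫" => @inner ℂ _ _ x y

/-- The Hilbert space `H = ℓ²(ℕ, ℂ)` of the quantum harmonic oscillator. -/
abbrev H : Type := lp (fun _ : ℕ => ℂ) 2

/-- The Fock (number) basis vector `|n⟩`. -/
def fock (n : ℕ) : H := lp.single 2 n 1

/-- Coefficientwise action of the annihilation operator `a`:
`(aψ)_n = √(n+1) ψ_{n+1}`. -/
def acoef (ψ : ℕ → ℂ) : ℕ → ℂ := fun n => (Real.sqrt (n + 1) : ℝ) * ψ (n + 1)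

/-- Coefficientwise action of the creation operator `a†`:
`(a†ψ)_n = √n ψ_{n-1}` for `n ≥ 1`, and `(a†ψ)_0 = 0`. -/
def adcoef (ψ : ℕ → ℂ) : ℕ → ℂ :=
  fun n => if n = 0 then 0 else (Real.sqrt n : ℝ) * ψ (n - 1)

/-- Coefficientwise action of `L = a^k − α^k I`. -/
def Lcoef (k : ℕ) (α : ℝ) (ψ : ℕ → ℂ) : ℕ → ℂ :=
  fun n => acoef^[k] ψ n - (α : ℂ) ^ k * ψ n

/-- Coefficientwise action of `L† = (a†)^k − α^k I`. -/
def Ldcoef (k : ℕ) (α : ℝ) (ψ : ℕ → ℂ) : ℕ → ℂ :=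
  fun n => adcoef^[k] ψ n - (α : ℂ) ^ k * ψ n

/-- Coefficientwise action of `L†L`. -/
def LdLcoef (k : ℕ) (α : ℝ) (ψ : ℕ → ℂ) : ℕ → ℂ := Ldcoef k α (Lcoef k α ψ)

/-- `ψ ∈ H_j`, the domain `{ψ : ∑ n^j |ψ_n|² < ∞}` (inside `ℓ²`). -/
def inHdom (j : ℕ) (ψ : ℕ → ℂ) : Prop :=
  Summable (fun n => ‖ψ n‖ ^ 2) ∧ Summable (fun n : ℕ => (n : ℝ) ^ j * ‖ψ n‖ ^ 2)

/-- Falling factorial `n(n−1)⋯(n−k+1)` (zero when `n < k`). -/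
def fallR (k n : ℕ) : ℝ := ∏ j ∈ Finset.range k, ((n : ℝ) - j)

/-- Rising product `(n+1)(n+2)⋯(n+k)`. -/
def riseR (k n : ℕ) : ℝ := ∏ j ∈ Finset.Icc 1 k, ((n : ℝ) + j)

/-- Eigenvalue `m(n)` of the commutator `M = [a^k, (a†)^k]` on `|n⟩`. -/
def mval (k n : ℕ) : ℝ := riseR k n - fallR k n

/-- The vector `L†|m⟩ = √((m+1)⋯(m+k)) |m+k⟩ − α^k |m⟩`. -/
def ldagFock (k : ℕ) (α : ℝ) (m : ℕ) : H :=
  ((Real.sqrt (riseR k m) : ℝ) : ℂ) • fock (m + k) - ((α : ℂ) ^ k) • fock m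

/-- The vector `L†L|m⟩`. -/
def ldlFock (k : ℕ) (α : ℝ) (m : ℕ) : H :=
  ((fallR k m + α ^ (2 * k) : ℝ) : ℂ) • fock m
    - ((α ^ k * Real.sqrt (fallR k m) : ℝ) : ℂ) • fock (m - k)
    - ((α ^ k * Real.sqrt (riseR k m) : ℝ) : ℂ) • fock (m + k)

/-- A bounded operator is a Hermitian trace-class operator (member of `K¹(H)`) when it is
self-adjoint and admits a spectral decomposition `T = ∑ c_μ |e_μ⟩⟨e_μ|` along a Hilbert basis
with absolutely summable real eigenvalues. -/
def IsHermitianTraceClass (T : H →L[ℂ] H) : Prop :=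
  IsSelfAdjoint T ∧
    ∃ (e : HilbertBasis ℕ ℂ H) (c : ℕ → ℝ),
      Summable (fun μ => |c μ|) ∧
      ∀ x : H, T x = ∑' μ, ((c μ : ℂ) * ⟪e μ, x⟫) • e μ

/-- Trace norm `tr|T| = ∑ |c_μ|` of a Hermitian trace-class operator. -/
def traceNorm (T : H →L[ℂ] H) : ℝ :=
  sInf {s | ∃ (e : HilbertBasis ℕ ℂ H) (c : ℕ → ℝ),
    Summable (fun μ => |c μ|) ∧
    (∀ x : H, T x = ∑' μ, ((c μ : ℂ) * ⟪e μ, x⟫) • e μ) ∧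
    s = ∑' μ, |c μ|}

/-- Trace of an operator, computed in the Fock basis. -/
def traceOf (T : H →L[ℂ] H) : ℝ := ∑' n, (⟪fock n, T (fock n)⟫).re

/-- Positive semidefinite bounded operator. -/
def IsPosSemidef (T : H →L[ℂ] H) : Prop :=
  IsSelfAdjoint T ∧ ∀ x : H, 0 ≤ (⟪x, T x⟫).re

/-- Loewner order on Hermitian operators. -/
def opLE (A B : H →L[ℂ] H) : Prop := IsPosSemidef (B - A)

/-- `(g, d)` is a spectral decomposition of `L†L`: a Hilbert basis of eigenvectors `g_μ`,
lying in the domain `H_{2k}`, with nonnegative eigenvalues `d_μ`. -/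
def IsSpectralBasis (k : ℕ) (α : ℝ) (g : HilbertBasis ℕ ℂ H) (d : ℕ → ℝ) : Prop :=
  (∀ μ, 0 ≤ d μ) ∧
    ∀ μ, inHdom (2 * k) (g μ) ∧
      ∀ n, LdLcoef k α (g μ) n = (d μ : ℂ) * (g μ) n

/-- Matrix entry `⟨g_μ| SρS |g_ν⟩ = √(1+d_μ)√(1+d_ν) ⟨g_μ|ρ|g_ν⟩` of `SρS`
in the eigenbasis `g` of `L†L`, where `S = √(I + L†L)`. -/
def SEntry (g : HilbertBasis ℕ ℂ H) (d : ℕ → ℝ) (ρ : H →L[ℂ] H) (μ ν : ℕ) : ℂ :=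
  ((Real.sqrt (1 + d μ) * Real.sqrt (1 + d ν) : ℝ) : ℂ) * ⟪g μ, ρ (g ν)⟫

/-- Membership in `K_L(H) = {ρ ∈ K¹(H) : tr|SρS| < ∞}`: `ρ` is Hermitian trace class and the
operator with matrix `SρS` is Hermitian trace class. -/
def memKL (g : HilbertBasis ℕ ℂ H) (d : ℕ → ℝ) (ρ : H →L[ℂ] H) : Prop :=
  IsHermitianTraceClass ρ ∧
    ∃ T : H →L[ℂ] H, IsHermitianTraceClass T ∧
      ∀ μ ν, ⟪g μ, T (g ν)⟫ = SEntry g d ρ μ ν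

/-- The norm `‖ρ‖_L = tr|SρS|` on `K_L(H)`. -/
def Lnorm (g : HilbertBasis ℕ ℂ H) (d : ℕ → ℝ) (ρ : H →L[ℂ] H) : ℝ :=
  sInf {s | ∃ T : H →L[ℂ] H, IsHermitianTraceClass T ∧
    (∀ μ ν, ⟪g μ, T (g ν)⟫ = SEntry g d ρ μ ν) ∧ s = traceNorm T}

/-- Fock-basis matrix entry `⟨m| 𝔄(ρ) |n⟩` of
`𝔄(ρ) = (L†Lρ + ρL†L)/2 − LρL†` (weak formulation). -/
def Amat (k : ℕ) (α : ℝ) (ρ : H →L[ℂ] H) (m n : ℕ) : ℂ :=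
  (1 / 2 : ℂ) * (⟪ldlFock k α m, ρ (fock n)⟫ + ⟪fock m, ρ (ldlFock k α n)⟫)
    - ⟪ldagFock k α m, ρ (ldagFock k α n)⟫

/-- `ρ` belongs to the domain of the superoperator `𝔄` on `K_L(H)`, with value `A = 𝔄(ρ)`. -/
def inDomA (k : ℕ) (α : ℝ) (g : HilbertBasis ℕ ℂ H) (d : ℕ → ℝ)
    (ρ A : H →L[ℂ] H) : Prop :=
  memKL g d ρ ∧ memKL g d A ∧ ∀ m n, ⟪fock m, A (fock n)⟫ = Amat k α ρ m n

/-- `(ρ, A)` is a `C¹` trajectory of the Lindblad master equation `dρ/dt = −𝔄(ρ)` in `K_L(H)`: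
`ρ(t)` lies in the domain of `𝔄` with `A(t) = 𝔄(ρ(t))`, the derivative of `ρ` in the
`‖·‖_L`-norm equals `−A(t)`, and `t ↦ A(t)` is `‖·‖_L`-continuous. -/
def IsLindbladTrajectory (k : ℕ) (α : ℝ) (g : HilbertBasis ℕ ℂ H) (d : ℕ → ℝ)
    (ρ A : ℝ → (H →L[ℂ] H)) : Prop :=
  (∀ t, 0 ≤ t → inDomA k α g d (ρ t) (A t)) ∧
  (∀ t, 0 ≤ t → Filter.Tendsto
      (fun h : ℝ => Lnorm g d (((1 / h : ℝ) : ℂ) • (ρ (t + h) - ρ t) + A t))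
      (nhdsWithin 0 {h : ℝ | h ≠ 0 ∧ 0 ≤ t + h}) (nhds 0)) ∧
  (∀ t, 0 ≤ t → Filter.Tendsto (fun s => Lnorm g d (A s - A t))
      (nhdsWithin t (Set.Ici 0)) (nhds 0))

/-- The coherent state amplitude `α_m = α e^{2iπm/k}` for `m = 1, …, k` (indexed by `Fin k`). -/
def catAmp (k : ℕ) (α : ℝ) (m : Fin k) : ℂ :=
  (α : ℂ) * Complex.exp (2 * Real.pi * Complex.I * (m.1 + 1) / k)

/-- Coefficients `e^{−|β|²/2} βⁿ/√(n!)` of the coherent state `|β⟩`. -/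
def cohCoeff (β : ℂ) : ℕ → ℂ :=
  fun n => ((Real.exp (-(‖β‖) ^ 2 / 2) : ℝ) : ℂ) * β ^ n
    / ((Real.sqrt (n.factorial) : ℝ) : ℂ)

open Classical in
/-- The coherent state `|β⟩ ∈ H`. -/
def coh (β : ℂ) : H :=
  if h : Memℓp (cohCoeff β) 2 then (⟨cohCoeff β, h⟩ : H) else 0

/-- The `k`-dimensional subspace `H_{α,k}` spanned by the coherent states `|α_m⟩`. -/
def catSpan (k : ℕ) (α : ℝ) : Submodule ℂ H :=
  Submodule.span ℂ (Set.range fun m : Fin k => coh (catAmp k α m))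

/-- The rank-one operator `|m⟩⟨n|`. -/
def ketbra (m n : ℕ) : H →L[ℂ] H := (innerSL ℂ (fock n)).smulRight (fock m)

/-- Coefficientwise action of `(a†)^k + a^k`. -/
def xcoef (k : ℕ) (ψ : ℕ → ℂ) : ℕ → ℂ :=
  fun n => adcoef^[k] ψ n + acoef^[k] ψ n

/-- Coefficientwise action of the inverse resolvent
`R_λ^{-1} = (I + λ(N(N−1)⋯(N−k+1) + α^{2k}))^{-1}`. -/
def rinvCoeff (k : ℕ) (α l : ℝ) (ψ : ℕ → ℂ) : ℕ → ℂ :=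
  fun n => (((1 + l * (fallR k n + α ^ (2 * k)))⁻¹ : ℝ) : ℂ) * ψ n

/-- Diagonal Fock-matrix entry `⟨n| 𝔏_L(ξ) |n⟩` of the Lindblad generator
`𝔏_L(ξ) = LξL† − ½L†Lξ − ½ξL†L` (weak formulation). -/
def lindDiag (k : ℕ) (α : ℝ) (ξ : H →L[ℂ] H) (n : ℕ) : ℂ :=
  ⟪ldagFock k α n, ξ (ldagFock k α n)⟫
    - (1 / 2 : ℂ) * ⟪ldlFock k α n, ξ (fock n)⟫
    - (1 / 2 : ℂ) * ⟪fock n, ξ (ldlFock k α n)⟫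

/-- The (unnormalized) `k`-legged Schrödinger cat state
`v_ℓ = ∑_{m=1}^k e^{2iπℓm/k} |α_m⟩`. -/
def catVec (k : ℕ) (α : ℝ) (l : ℤ) : H :=
  ∑ m ∈ Finset.Icc 1 k,
    Complex.exp (2 * Real.pi * Complex.I * l * m / k) •
      coh ((α : ℂ) * Complex.exp (2 * Real.pi * Complex.I * m / k))

/-- The vector `(I + λL†L)/2 |m⟩`. -/
def resFock (k : ℕ) (α l : ℝ) (m : ℕ) : H :=
  (1 / 2 : ℂ) • (fock m + ((l : ℝ) : ℂ) • ldlFock k α m)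

/-- Weak (matrix-element) formulation of the Sylvester-type equation
`((I+λL†L)/2)ρ + ρ((I+λL†L)/2) = f + rλ LρL†`. -/
def sylvEq (k : ℕ) (α l r : ℝ) (f ρ : H →L[ℂ] H) : Prop :=
  ∀ m n, ⟪resFock k α l m, ρ (fock n)⟫ + ⟪fock m, ρ (resFock k α l n)⟫
    = ⟪fock m, f (fock n)⟫ + ((r * l : ℝ) : ℂ) * ⟪ldagFock k α m, ρ (ldagFock k α n)⟫

/-- `m(n)` as an integer: `(n+1)(n+2)⋯(n+k) − n(n−1)⋯(n−k+1)`. -/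
def mInt (k n : ℕ) : ℤ :=
  (∏ j ∈ Finset.Icc 1 k, ((n : ℤ) + j)) - ∏ j ∈ Finset.range k, ((n : ℤ) - j)


-- =================== auxiliary lemmas ===================

lemma fallR_succ' (k n : ℕ) : fallR (k+1) n = fallR k n * ((n:ℝ) - k) := by
  simp [fallR, Finset.prod_range_succ]

lemma fallR_eq_zero_of_lt {k n : ℕ} (h : n < k) : fallR k n = 0 :=
  Finset.prod_eq_zero (Finset.mem_range.mpr h) (by simp)

lemma fallR_nonneg (k n : ℕ) : 0 ≤ fallR k n := by
  rcases lt_or_ge n k with h | h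
  · rw [fallR_eq_zero_of_lt h]
  · refine Finset.prod_nonneg fun j hj => ?_
    have hj' : j < k := Finset.mem_range.mp hj
    have : (j:ℝ) ≤ n := by exact_mod_cast (hj'.le.trans h)
    linarith

lemma riseR_succ' (k n : ℕ) : riseR (k+1) n = riseR k n * ((n:ℝ) + (k+1)) := by
  rw [riseR, riseR, Finset.prod_Icc_succ_top (Nat.le_add_left 1 k)]
  push_cast
  ring_nf

lemma riseR_range (k n : ℕ) : riseR k n = ∏ j ∈ Finset.range k, ((n:ℝ) + j + 1) := by
  induction k with
  | zero => simp [riseR]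
  | succ k ih => rw [riseR_succ', ih, Finset.prod_range_succ]; ring

lemma riseR_pos (k n : ℕ) : 0 < riseR k n := by
  rw [riseR_range]
  exact Finset.prod_pos fun j hj => by positivity

lemma riseR_succ_left (k n : ℕ) : riseR (k+1) n = ((n:ℝ)+1) * riseR k (n+1) := by
  rw [riseR_range, riseR_range, Finset.prod_range_succ', mul_comm]
  congr 1
  · push_cast; simp
  · refine Finset.prod_congr rfl fun j hj => ?_
    push_cast; ring

lemma fallR_add (k n : ℕ) : fallR k (n + k) = riseR k n := by
  induction k generalizing n with
  | zero => simp [fallR, riseR]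
  | succ k ih =>
    have h : n + (k+1) = (n+1) + k := by ring
    rw [riseR_succ_left, h, fallR_succ', ih (n+1)]
    push_cast
    ring

lemma fallR_le_riseR (k n : ℕ) : fallR k n ≤ riseR k n := by
  rcases lt_or_ge n k with h | h
  · rw [fallR_eq_zero_of_lt h]; exact (riseR_pos k n).le
  · rw [riseR_range, fallR]
    refine Finset.prod_le_prod (fun j hj => ?_) (fun j hj => ?_)
    · have hj' : j < k := Finset.mem_range.mp hj
      have : (j:ℝ) ≤ n := by exact_mod_cast (hj'.le.trans h)
      linarith
    · linarith

lemma adcoef_iter (k : ℕ) (ψ : ℕ → ℂ) (n : ℕ) :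
    adcoef^[k] ψ n = ((Real.sqrt (fallR k n) : ℝ) : ℂ) * ψ (n - k) := by
  induction k generalizing ψ n with
  | zero => simp [fallR]
  | succ k ih =>
    rw [Function.iterate_succ_apply, ih]
    rcases lt_or_ge n (k+1) with h | h
    · have h1 : n - k = 0 := Nat.sub_eq_zero_of_le (Nat.lt_succ_iff.mp h)
      rw [fallR_eq_zero_of_lt h]
      simp [adcoef, h1]
    · have h1 : n - k ≠ 0 := by omega
      have h2 : n - k - 1 = n - (k+1) := by omega
      have h3 : ((n - k : ℕ) : ℝ) = (n:ℝ) - k := by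
        have : k ≤ n := by omega
        push_cast [this]; ring
      have h4 : (0:ℝ) ≤ (n:ℝ) - k := by
        have : (k:ℝ) ≤ n := by exact_mod_cast (by omega : k ≤ n)
        linarith
      rw [adcoef]
      rw [if_neg h1, h2, fallR_succ', Real.sqrt_mul (fallR_nonneg k n), h3]
      push_cast
      ring

lemma acoef_iter (k : ℕ) (ψ : ℕ → ℂ) (n : ℕ) :
    acoef^[k] ψ n = ((Real.sqrt (riseR k n) : ℝ) : ℂ) * ψ (n + k) := by
  induction k generalizing ψ n with
  | zero => simp [riseR]
  | succ k ih =>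
    rw [Function.iterate_succ_apply, ih, acoef]
    have h3 : ((n + k : ℕ) : ℝ) + 1 = (n:ℝ) + ((k:ℝ)+1) := by push_cast; ring
    have h4 : (0:ℝ) ≤ (n:ℝ) + ((k:ℝ)+1) := by positivity
    rw [riseR_succ', Real.sqrt_mul (riseR_pos k n).le, h3]
    have h5 : n + k + 1 = n + (k+1) := by ring
    rw [h5]
    push_cast
    ring

lemma xcoef_eq (k : ℕ) (ψ : ℕ → ℂ) (n : ℕ) :
    xcoef k ψ n = ((Real.sqrt (fallR k n) : ℝ) : ℂ) * ψ (n - k)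
      + ((Real.sqrt (riseR k n) : ℝ) : ℂ) * ψ (n + k) := by
  rw [xcoef, adcoef_iter, acoef_iter]

lemma H_summable (ψ : H) : Summable (fun n => ‖ψ n‖^2) := by
  have h := (lp.memℓp ψ).summable (p := 2) (by norm_num)
  simpa [Real.rpow_two] using h

lemma H_norm_sq (ψ : H) : ‖ψ‖^2 = ∑' n, ‖ψ n‖^2 := by
  have h := lp.norm_rpow_eq_tsum (p := 2) (by norm_num) ψ
  simpa [Real.rpow_two] using h

lemma aux_wbound {l D : ℝ} (hl : 0 < l) (hD : 0 < D) :
    l * D * ((1 + l * D)⁻¹)^2 ≤ 1 := by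
  have h1 : (0:ℝ) < 1 + l*D := by nlinarith
  rw [inv_pow, ← div_eq_mul_inv, div_le_one (by positivity)]
  nlinarith

set_option maxHeartbeats 1000000 in
/-- There is `c > 0` with
`λ²α^{2k}‖((a†)^k + a^k)(R_λ^{−1}ψ)‖² ≤ cλ‖ψ‖²` for all `λ > 0`, `ψ ∈ ℓ²`; hence for
`0 < λ < 1/c` the operator `λα^k((a†)^k + a^k)R_λ^{−1}` extends to a bounded operator of
norm `< 1`. -/
theorem perturbation_bounded (k : ℕ) (hk : 1 ≤ k) (α : ℝ) (hα : 0 < α) :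
    ∃ c : ℝ, 0 < c ∧
      (∀ l : ℝ, 0 < l → ∀ ψ : H,
        Summable (fun n => ‖xcoef k (rinvCoeff k α l ψ) n‖ ^ 2) ∧
        l ^ 2 * α ^ (2 * k) * (∑' n, ‖xcoef k (rinvCoeff k α l ψ) n‖ ^ 2)
          ≤ c * l * ‖ψ‖ ^ 2) ∧
      (∀ l : ℝ, 0 < l → l < 1 / c →
        ∃ B : H →L[ℂ] H, ‖B‖ < 1 ∧
          ∀ (ψ : H) (n : ℕ),
            B ψ n = ((l * α ^ k : ℝ) : ℂ) * xcoef k (rinvCoeff k α l ψ) n) := by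
  have hα2k : 0 < α ^ (2*k) := by positivity
  set C : ℝ := 4^k + (3*(k:ℝ))^k / α^(2*k) with hCdef
  have hC4 : (4:ℝ)^k ≤ C := by
    have : (0:ℝ) ≤ (3*(k:ℝ))^k / α^(2*k) := by positivity
    rw [hCdef]; linarith
  have hCpos : 0 < C := lt_of_lt_of_le (by positivity) hC4
  have hrise_le : ∀ m : ℕ, riseR k m ≤ C * (fallR k m + α^(2*k)) := by
    intro m
    rcases le_or_gt (2*k) m with h | h
    · have h1 : riseR k m ≤ 4^k * fallR k m := by
        rw [riseR_range, fallR]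
        calc ∏ j ∈ Finset.range k, ((m:ℝ)+j+1)
            ≤ ∏ j ∈ Finset.range k, (4*((m:ℝ)-j)) := by
              refine Finset.prod_le_prod (fun j hj => by positivity) (fun j hj => ?_)
              have hj' : (j:ℝ) < k := by exact_mod_cast Finset.mem_range.mp hj
              have hm : 2*(k:ℝ) ≤ m := by exact_mod_cast h
              have hk1 : (1:ℝ) ≤ k := by exact_mod_cast hk
              linarith
          _ = 4^k * ∏ j ∈ Finset.range k, ((m:ℝ)-j) := by
              rw [Finset.prod_mul_distrib, Finset.prod_const, Finset.card_range]
      have h3 := fallR_nonneg k m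
      nlinarith [mul_le_mul_of_nonneg_right hC4 h3, mul_pos hCpos hα2k]
    · have h1 : riseR k m ≤ (3*(k:ℝ))^k := by
        rw [riseR_range]
        calc ∏ j ∈ Finset.range k, ((m:ℝ)+j+1)
            ≤ ∏ j ∈ Finset.range k, (3*(k:ℝ)) := by
              refine Finset.prod_le_prod (fun j hj => by positivity) (fun j hj => ?_)
              have hj2 : (j:ℝ)+1 ≤ k := by
                exact_mod_cast Nat.succ_le_of_lt (Finset.mem_range.mp hj)
              have hm2 : (m:ℝ)+1 ≤ 2*k := by exact_mod_cast Nat.succ_le_of_lt h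
              linarith
          _ = (3*(k:ℝ))^k := by rw [Finset.prod_const, Finset.card_range]
      have h2 : (3*(k:ℝ))^k ≤ C * α^(2*k) := by
        rw [hCdef, add_mul, div_mul_cancel₀ _ hα2k.ne']
        nlinarith [pow_nonneg (by norm_num : (0:ℝ) ≤ 4) k]
      have h3 := fallR_nonneg k m
      nlinarith [mul_nonneg hCpos.le h3]
  -- main estimate
  have main : ∀ l : ℝ, 0 < l → ∀ ψ : H,
      Summable (fun n => ‖xcoef k (rinvCoeff k α l ψ) n‖ ^ 2) ∧
      l ^ 2 * α ^ (2 * k) * (∑' n, ‖xcoef k (rinvCoeff k α l ψ) n‖ ^ 2)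
        ≤ (4*C*α^(2*k)) * l * ‖ψ‖ ^ 2 := by
    intro l hl ψ
    set w : ℕ → ℝ := fun m => (1 + l * (fallR k m + α ^ (2*k)))⁻¹ with hw
    have hwpos : ∀ m, 0 < w m := by
      intro m
      have h0 := fallR_nonneg k m
      simp only [hw]
      have : (0:ℝ) < 1 + l * (fallR k m + α ^ (2*k)) := by nlinarith
      exact inv_pos.mpr this
    have hφ : ∀ m, ‖(rinvCoeff k α l ψ) m‖^2 = (w m)^2 * ‖ψ m‖^2 := by
      intro m
      rw [rinvCoeff]
      rw [norm_mul, Complex.norm_real, Real.norm_eq_abs]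
      rw [abs_of_pos (hwpos m)]
      ring
    set G : ℕ → ℝ := fun m => riseR k m * (w m)^2 * ‖ψ m‖^2 with hG
    have hGnn : ∀ m, 0 ≤ G m := by
      intro m
      exact mul_nonneg (mul_nonneg (riseR_pos k m).le (sq_nonneg _)) (sq_nonneg _)
    have key : ∀ m, l * (riseR k m * (w m)^2) ≤ C := by
      intro m
      have hDpos : (0:ℝ) < fallR k m + α^(2*k) := by
        have := fallR_nonneg k m; nlinarith
      have h2 : l * (fallR k m + α^(2*k)) * (w m)^2 ≤ 1 := by
        simpa only [hw] using aux_wbound hl hDpos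
      calc l * (riseR k m * (w m)^2)
          ≤ l * ((C * (fallR k m + α^(2*k))) * (w m)^2) := by
            exact mul_le_mul_of_nonneg_left
              (mul_le_mul_of_nonneg_right (hrise_le m) (sq_nonneg _)) hl.le
        _ = C * (l * (fallR k m + α^(2*k)) * (w m)^2) := by ring
        _ ≤ C * 1 := mul_le_mul_of_nonneg_left h2 hCpos.le
        _ = C := mul_one C
    have hψs := H_summable ψ
    have hterm : ∀ m, l * G m ≤ C * ‖ψ m‖^2 := by
      intro m
      calc l * G m = (l * (riseR k m * (w m)^2)) * ‖ψ m‖^2 := by simp only [hG]; ring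
        _ ≤ C * ‖ψ m‖^2 := mul_le_mul_of_nonneg_right (key m) (sq_nonneg _)
    have hlG_summable : Summable (fun m => l * G m) :=
      Summable.of_nonneg_of_le (fun m => mul_nonneg hl.le (hGnn m)) hterm (hψs.mul_left C)
    have hGsum : Summable G := by
      have h := hlG_summable.mul_left l⁻¹
      have e : (fun m => l⁻¹ * (l * G m)) = G := by
        funext m; rw [← mul_assoc, inv_mul_cancel₀ hl.ne', one_mul]
      rwa [e] at h
    have hGsum_le : l * ∑' m, G m ≤ C * ‖ψ‖^2 := by
      rw [← tsum_mul_left]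
      calc ∑' m, l * G m ≤ ∑' m, C * ‖ψ m‖^2 :=
            Summable.tsum_le_tsum hterm hlG_summable (hψs.mul_left C)
        _ = C * ∑' m, ‖ψ m‖^2 := tsum_mul_left
        _ = C * ‖ψ‖^2 := by rw [← H_norm_sq]
    set hfun : ℕ → ℝ := fun n => if k ≤ n then G (n-k) else 0 with hhf
    have e1 : (fun n => hfun (n+k)) = G := by
      funext n; simp [hhf]
    have hfun_summable : Summable hfun := by
      refine (summable_nat_add_iff k).mp ?_
      rw [e1]; exact hGsum
    have hfun_tsum : ∑' n, hfun n = ∑' n, G n := by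
      have h0 : ∑ i ∈ Finset.range k, hfun i = 0 := by
        refine Finset.sum_eq_zero fun i hi => ?_
        simp [hhf, Nat.not_le.mpr (Finset.mem_range.mp hi)]
      rw [← Summable.sum_add_tsum_nat_add k hfun_summable, h0, zero_add, e1]
    have hGshift_summable : Summable (fun n => G (n+k)) := (summable_nat_add_iff k).mpr hGsum
    have hGshift_le : ∑' n, G (n+k) ≤ ∑' n, G n := by
      have h := Summable.sum_add_tsum_nat_add k hGsum
      have h0 : 0 ≤ ∑ i ∈ Finset.range k, G i := Finset.sum_nonneg fun i _ => hGnn i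
      linarith
    have hSbound : ∀ n, ‖xcoef k (rinvCoeff k α l ψ) n‖^2 ≤ 2*(hfun n + G (n+k)) := by
      intro n
      rw [xcoef_eq]
      set x := ((Real.sqrt (fallR k n) : ℝ):ℂ) * (rinvCoeff k α l ψ) (n-k) with hx
      set y := ((Real.sqrt (riseR k n) : ℝ):ℂ) * (rinvCoeff k α l ψ) (n+k) with hy
      have hxn : ‖x‖^2 = fallR k n * ‖(rinvCoeff k α l ψ) (n-k)‖^2 := by
        rw [hx, norm_mul, Complex.norm_real, Real.norm_eq_abs,
          abs_of_nonneg (Real.sqrt_nonneg _), mul_pow, Real.sq_sqrt (fallR_nonneg k n)]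
      have hyn : ‖y‖^2 = riseR k n * ‖(rinvCoeff k α l ψ) (n+k)‖^2 := by
        rw [hy, norm_mul, Complex.norm_real, Real.norm_eq_abs,
          abs_of_nonneg (Real.sqrt_nonneg _), mul_pow, Real.sq_sqrt (riseR_pos k n).le]
      have h1 : ‖x + y‖^2 ≤ 2*(‖x‖^2 + ‖y‖^2) := by
        have hle := norm_add_le x y
        nlinarith [sq_nonneg (‖x‖ - ‖y‖), norm_nonneg x, norm_nonneg y, norm_nonneg (x+y),
          mul_self_le_mul_self (norm_nonneg (x+y)) hle]
      have h2 : fallR k n * ‖(rinvCoeff k α l ψ) (n-k)‖^2 = hfun n := by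
        rcases lt_or_ge n k with hnk | hnk
        · rw [fallR_eq_zero_of_lt hnk]
          simp [hhf, Nat.not_le.mpr hnk]
        · have e2 : (n-k) + k = n := Nat.sub_add_cancel hnk
          rw [hφ (n-k)]
          simp only [hhf, if_pos hnk, hG]
          rw [← e2, fallR_add]
          simp only [Nat.add_sub_cancel]
          ring
      have h3 : riseR k n * ‖(rinvCoeff k α l ψ) (n+k)‖^2 ≤ G (n+k) := by
        rw [hφ (n+k)]
        simp only [hG]
        rw [show riseR k n = fallR k (n+k) from (fallR_add k n).symm]
        have h4 := fallR_le_riseR k (n+k)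
        nlinarith [mul_le_mul_of_nonneg_right h4
          (mul_nonneg (sq_nonneg (w (n+k))) (sq_nonneg ‖ψ (n+k)‖))]
      calc ‖x+y‖^2 ≤ 2*(‖x‖^2 + ‖y‖^2) := h1
        _ = 2*(fallR k n * ‖(rinvCoeff k α l ψ) (n-k)‖^2
              + riseR k n * ‖(rinvCoeff k α l ψ) (n+k)‖^2) := by rw [hxn, hyn]
        _ ≤ 2*(hfun n + G (n+k)) := by linarith [h2, h3]
    have hRHS_summable : Summable (fun n => 2*(hfun n + G (n+k))) :=
      (hfun_summable.add hGshift_summable).mul_left 2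
    have hS_summable : Summable (fun n => ‖xcoef k (rinvCoeff k α l ψ) n‖^2) :=
      Summable.of_nonneg_of_le (fun n => sq_nonneg _) hSbound hRHS_summable
    refine ⟨hS_summable, ?_⟩
    have hStsum : ∑' n, ‖xcoef k (rinvCoeff k α l ψ) n‖^2 ≤ 4 * ∑' m, G m := by
      calc ∑' n, ‖xcoef k (rinvCoeff k α l ψ) n‖^2
          ≤ ∑' n, 2*(hfun n + G (n+k)) := Summable.tsum_le_tsum hSbound hS_summable hRHS_summable
        _ = 2*((∑' n, hfun n) + ∑' n, G (n+k)) := by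
            rw [tsum_mul_left, Summable.tsum_add hfun_summable hGshift_summable]
        _ ≤ 4 * ∑' m, G m := by rw [hfun_tsum]; linarith [hGshift_le]
    calc l^2*α^(2*k) * ∑' n, ‖xcoef k (rinvCoeff k α l ψ) n‖^2
        ≤ l^2*α^(2*k) * (4*∑' m, G m) :=
          mul_le_mul_of_nonneg_left hStsum (by positivity)
      _ = 4*α^(2*k)*l*(l*∑' m, G m) := by ring
      _ ≤ 4*α^(2*k)*l*(C*‖ψ‖^2) :=
          mul_le_mul_of_nonneg_left hGsum_le (by positivity)
      _ = 4*C*α^(2*k) * l * ‖ψ‖^2 := by ring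
  refine ⟨4*C*α^(2*k), by positivity, main, ?_⟩
  intro l hl hl2
  have hcl : (4*C*α^(2*k)) * l < 1 := by
    rw [lt_div_iff₀ (by positivity)] at hl2
    nlinarith
  have hclpos : 0 < (4*C*α^(2*k)) * l := by positivity
  have hconst : (l*α^k)^2 = l^2 * α^(2*k) := by
    rw [mul_pow, ← pow_mul, mul_comm k 2]
  have hTfnorm : ∀ (ψ : H) (n : ℕ),
      ‖((l * α^k : ℝ):ℂ) * xcoef k (rinvCoeff k α l ψ) n‖^2
        = l^2*α^(2*k) * ‖xcoef k (rinvCoeff k α l ψ) n‖^2 := by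
    intro ψ n
    rw [norm_mul, Complex.norm_real, Real.norm_eq_abs, mul_pow, sq_abs, hconst]
  have hsummT : ∀ ψ : H, Summable
      (fun n => ‖((l * α^k : ℝ):ℂ) * xcoef k (rinvCoeff k α l ψ) n‖^2) := by
    intro ψ
    have h := ((main l hl ψ).1).mul_left (l^2*α^(2*k))
    exact h.congr fun n => (hTfnorm ψ n).symm
  have hmem : ∀ ψ : H,
      Memℓp (fun n => ((l * α^k : ℝ):ℂ) * xcoef k (rinvCoeff k α l ψ) n) 2 := by
    intro ψ
    apply memℓp_gen
    have h := hsummT ψ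
    simpa [Real.rpow_two] using h
  have htsum : ∀ ψ : H,
      ∑' n, ‖((l * α^k : ℝ):ℂ) * xcoef k (rinvCoeff k α l ψ) n‖^2
        ≤ ((4*C*α^(2*k)) * l) * ‖ψ‖^2 := by
    intro ψ
    have h1 := (main l hl ψ).2
    calc ∑' n, ‖((l * α^k : ℝ):ℂ) * xcoef k (rinvCoeff k α l ψ) n‖^2
        = l^2*α^(2*k) * ∑' n, ‖xcoef k (rinvCoeff k α l ψ) n‖^2 := by
          rw [← tsum_mul_left]; exact tsum_congr (hTfnorm ψ)
      _ ≤ (4*C*α^(2*k)) * l * ‖ψ‖^2 := h1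
  have hTf_formula : ∀ (f : ℕ → ℂ) (n : ℕ), xcoef k (rinvCoeff k α l f) n
      = ((Real.sqrt (fallR k n) * (1 + l * (fallR k (n-k) + α ^ (2*k)))⁻¹ : ℝ):ℂ) * f (n-k)
      + ((Real.sqrt (riseR k n) * (1 + l * (fallR k (n+k) + α ^ (2*k)))⁻¹ : ℝ):ℂ) * f (n+k) := by
    intro f n
    rw [xcoef_eq]
    simp only [rinvCoeff]
    push_cast
    ring
  set Blin : H →ₗ[ℂ] H :=
    { toFun := fun ψ => ⟨fun n => ((l * α^k : ℝ):ℂ) * xcoef k (rinvCoeff k α l ψ) n, hmem ψ⟩,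
      map_add' := by
        intro ψ φ
        apply lp.ext
        funext n
        have hc : ⇑(ψ + φ) = ⇑ψ + ⇑φ := lp.coeFn_add ψ φ
        show ((l * α^k : ℝ):ℂ) * xcoef k (rinvCoeff k α l (ψ + φ)) n
          = ((l * α^k : ℝ):ℂ) * xcoef k (rinvCoeff k α l ψ) n
            + ((l * α^k : ℝ):ℂ) * xcoef k (rinvCoeff k α l φ) n
        rw [hTf_formula, hTf_formula, hTf_formula]
        simp only [lp.coeFn_add, Pi.add_apply]
        ring
      map_smul' := by
        intro a ψ
        apply lp.ext
        funext n
        have hc : ⇑(a • ψ) = a • ⇑ψ := lp.coeFn_smul a ψ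
        show ((l * α^k : ℝ):ℂ) * xcoef k (rinvCoeff k α l (a • ψ)) n
          = a * (((l * α^k : ℝ):ℂ) * xcoef k (rinvCoeff k α l ψ) n)
        rw [hTf_formula, hTf_formula]
        simp only [lp.coeFn_smul, Pi.smul_apply, smul_eq_mul]
        ring } with hBlin
  have hnormle : ∀ ψ : H, ‖Blin ψ‖ ≤ Real.sqrt ((4*C*α^(2*k)) * l) * ‖ψ‖ := by
    intro ψ
    have h1 : ‖Blin ψ‖^2 = ∑' n, ‖((l * α^k : ℝ):ℂ) * xcoef k (rinvCoeff k α l ψ) n‖^2 :=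
      H_norm_sq (Blin ψ)
    have h2 : ‖Blin ψ‖^2 ≤ ((4*C*α^(2*k)) * l) * ‖ψ‖^2 := by rw [h1]; exact htsum ψ
    have h3 : ‖Blin ψ‖ = Real.sqrt (‖Blin ψ‖^2) := (Real.sqrt_sq (norm_nonneg _)).symm
    rw [h3]
    calc Real.sqrt (‖Blin ψ‖^2) ≤ Real.sqrt (((4*C*α^(2*k)) * l) * ‖ψ‖^2) :=
          Real.sqrt_le_sqrt h2
      _ = Real.sqrt ((4*C*α^(2*k)) * l) * ‖ψ‖ := by
          rw [Real.sqrt_mul hclpos.le, Real.sqrt_sq (norm_nonneg _)]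
  refine ⟨Blin.mkContinuous (Real.sqrt ((4*C*α^(2*k)) * l)) hnormle, ?_, ?_⟩
  · have h4 := Blin.mkContinuous_norm_le (Real.sqrt_nonneg ((4*C*α^(2*k)) * l)) hnormle
    have h5 : Real.sqrt ((4*C*α^(2*k)) * l) < 1 := by
      calc Real.sqrt ((4*C*α^(2*k)) * l) < Real.sqrt 1 :=
            Real.sqrt_lt_sqrt hclpos.le hcl
        _ = 1 := Real.sqrt_one
    linarith
  · intro ψ n
    rfl

end
end

section
/- Fix an integer k ≥ 1, a real α > 0, and set L = a^k − α^k I. For every finite-rank operator ξ = ∑_{n,n'≤N} f_{n,n'} |n⟩⟨n'| (f_{n,n'} ∈ ℂ, N ∈ ℕ) and every integer m, the diagonal coefficients of 𝔏_L(ξ) = LξL† − ½L†Lξ − ½ξL†L satisfy ∑_{n∈ℕ} cos(2πmn/k) ⟨n|𝔏_L(ξ)|n⟩ = 0 and ∑_{n∈ℕ} sin(2πmn/k) ⟨n|𝔏_L(ξ)|n⟩ = 0 (the sums having finitely many nonzero terms). Equivalently, tr(Q^cos_m 𝔏_L(ξ)) = tr(Q^sin_m 𝔏_L(ξ)) = 0,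 where Q^cos_m = ∑_n cos(2πmn/k)|n⟩⟨n| and Q^sin_m = ∑_n sin(2πmn/k)|n⟩⟨n|. -/
noncomputable section

open scoped BigOperators ComplexConjugate

local notation "⟪" x ", " y "⟫" => @inner ℂ _ _ x y

/-! ### Auxiliary lemmas for Statement 18 -/

lemma fock_inner (p q : ℕ) : ⟪fock p, fock q⟫ = if p = q then 1 else 0 := by
  rw [fock, fock, lp.inner_single_left]
  by_cases h : p = q
  · subst h
    rw [lp.single_apply_self]
    simp
  · rw [lp.single_apply_ne 2 q 1 h]
    simp [h]

lemma fock_norm (q : ℕ) : ‖fock q‖ = 1 := by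
  rw [fock, lp.norm_single (by norm_num)]
  simp

lemma entry_ketbra (i j p q : ℕ) :
    ⟪fock p, ketbra i j (fock q)⟫
      = (if j = q then (1 : ℂ) else 0) * (if p = i then 1 else 0) := by
  by_cases h : j = q <;>
    simp [ketbra, ContinuousLinearMap.smulRight_apply, inner_smul_right, fock_inner, h, fock_norm]

lemma entry_zero (N : ℕ) (f : ℕ → ℕ → ℂ) (ξ : H →L[ℂ] H)
    (hξ : ξ = ∑ i ∈ Finset.range (N + 1), ∑ j ∈ Finset.range (N + 1), f i j • ketbra i j)
    (p q : ℕ) (h : N < p ∨ N < q) : ⟪fock p, ξ (fock q)⟫ = 0 := by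
  subst hξ
  simp only [ContinuousLinearMap.sum_apply, ContinuousLinearMap.smul_apply, inner_sum,
    inner_smul_right]
  refine Finset.sum_eq_zero fun i hi => Finset.sum_eq_zero fun j hj => ?_
  simp only [Finset.mem_range] at hi hj
  rcases h with h | h
  · have hpi : p ≠ i := by omega
    simp [entry_ketbra, hpi]
  · have hjq : j ≠ q := by omega
    simp [entry_ketbra, hjq]

lemma riseR_nonneg (k n : ℕ) : 0 ≤ riseR k n := by
  refine Finset.prod_nonneg fun j hj => ?_
  positivity

lemma fallR_eq_zero (k n : ℕ) (h : n < k) : fallR k n = 0 :=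
  Finset.prod_eq_zero (Finset.mem_range.2 h) (by simp)

lemma lindDiag_expand (k : ℕ) (α : ℝ) (ξ : H →L[ℂ] H) (n : ℕ) :
    lindDiag k α ξ n =
      ((riseR k n : ℝ) : ℂ) * ⟪fock (n + k), ξ (fock (n + k))⟫
      - ((fallR k n : ℝ) : ℂ) * ⟪fock n, ξ (fock n)⟫
      - (1 / 2 : ℂ) * (α : ℂ) ^ k * ((Real.sqrt (riseR k n) : ℝ) : ℂ) *
          (⟪fock (n + k), ξ (fock n)⟫ + ⟪fock n, ξ (fock (n + k))⟫)
      + (1 / 2 : ℂ) * (α : ℂ) ^ k * ((Real.sqrt (fallR k n) : ℝ) : ℂ) *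
          (⟪fock (n - k), ξ (fock n)⟫ + ⟪fock n, ξ (fock (n - k))⟫) := by
  have hr : ((Real.sqrt (riseR k n) : ℝ) : ℂ) * ((Real.sqrt (riseR k n) : ℝ) : ℂ)
      = ((riseR k n : ℝ) : ℂ) := by
    rw [← Complex.ofReal_mul, Real.mul_self_sqrt (riseR_nonneg k n)]
  have hα : ((α : ℂ)) ^ (2 * k) = (α : ℂ) ^ k * (α : ℂ) ^ k := by
    rw [two_mul, pow_add]
  simp only [lindDiag, ldagFock, ldlFock, inner_sub_left, inner_sub_right,
    inner_smul_left, inner_smul_right, map_sub, map_smul, map_mul, map_add,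
    Complex.conj_ofReal, map_pow, Complex.ofReal_mul, Complex.ofReal_add,
    Complex.ofReal_pow]
  linear_combination ⟪fock (n + k), ξ (fock (n + k))⟫ * hr
    - ⟪fock n, ξ (fock n)⟫ * hα

lemma tsum_shift_telescope (c : ℕ → ℂ) (k M : ℕ) (h0 : ∀ n, n < k → c n = 0)
    (hM : ∀ n, M ≤ n → c n = 0) : ∑' n : ℕ, (c (n + k) - c n) = 0 := by
  have hs : Summable c := summable_of_ne_finset_zero (s := Finset.range M)
    (fun n hn => hM n (by simpa using hn))
  have hs2 : Summable (fun n => c (n + k)) :=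
    summable_of_ne_finset_zero (s := Finset.range M)
      (fun n hn => hM (n + k) (by simp only [Finset.mem_range, not_lt] at hn; omega))
  rw [Summable.tsum_sub hs2 hs]
  have key : ∑' n, c (n + k) = ∑' n, c n := by
    refine Function.Injective.tsum_eq (g := fun n : ℕ => n + k) (add_left_injective k) ?_
    intro x hx
    rcases lt_or_ge x k with h | h
    · exact absurd (h0 x h) hx
    · exact ⟨x - k, Nat.sub_add_cancel h⟩
  rw [key, sub_self]

lemma key_sum (k : ℕ) (hk : 1 ≤ k) (α : ℝ) (N : ℕ) (f : ℕ → ℕ → ℂ) (ξ : H →L[ℂ] H)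
    (hξ : ξ = ∑ i ∈ Finset.range (N + 1), ∑ j ∈ Finset.range (N + 1), f i j • ketbra i j)
    (w : ℕ → ℝ) (hw : ∀ n, w (n + k) = w n) :
    ∑' n : ℕ, ((w n : ℝ) : ℂ) * lindDiag k α ξ n = 0 := by
  set c : ℕ → ℂ := fun n => ((w n : ℝ) : ℂ) * ((fallR k n : ℝ) : ℂ) * ⟪fock n, ξ (fock n)⟫
    with hc
  set d : ℕ → ℂ := fun n => ((w n : ℝ) : ℂ) * (1 / 2 : ℂ) * (α : ℂ) ^ k *
      ((Real.sqrt (fallR k n) : ℝ) : ℂ) *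
      (⟪fock (n - k), ξ (fock n)⟫ + ⟪fock n, ξ (fock (n - k))⟫) with hd
  have hczero : ∀ n, n < k ∨ N < n → c n = 0 := by
    intro n h
    rcases h with h | h
    · simp [hc, fallR_eq_zero k n h]
    · simp [hc, entry_zero N f ξ hξ n n (Or.inl h)]
  have hdzero : ∀ n, n < k ∨ N < n → d n = 0 := by
    intro n h
    rcases h with h | h
    · simp [hd, Real.sqrt_eq_zero', fallR_eq_zero k n h]
    · simp [hd, entry_zero N f ξ hξ (n - k) n (Or.inr h),
        entry_zero N f ξ hξ n (n - k) (Or.inl h)]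
  have heq : ∀ n : ℕ, ((w n : ℝ) : ℂ) * lindDiag k α ξ n
      = (c (n + k) - c n) - (d (n + k) - d n) := by
    intro n
    rw [lindDiag_expand]
    simp only [hc, hd]
    rw [hw n, fallR_add, Nat.add_sub_cancel]
    ring
  have hsc : Summable (fun n : ℕ => c (n + k) - c n) :=
    summable_of_ne_finset_zero (s := Finset.range (N + 1)) (fun n hn => by
      simp only [Finset.mem_range, not_lt] at hn
      rw [hczero (n + k) (Or.inr (by omega)), hczero n (Or.inr (by omega)), sub_self])
  have hsd : Summable (fun n : ℕ => d (n + k) - d n) :=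
    summable_of_ne_finset_zero (s := Finset.range (N + 1)) (fun n hn => by
      simp only [Finset.mem_range, not_lt] at hn
      rw [hdzero (n + k) (Or.inr (by omega)), hdzero n (Or.inr (by omega)), sub_self])
  calc ∑' n : ℕ, ((w n : ℝ) : ℂ) * lindDiag k α ξ n
      = ∑' n : ℕ, ((c (n + k) - c n) - (d (n + k) - d n)) := tsum_congr heq
    _ = (∑' n : ℕ, (c (n + k) - c n)) - ∑' n : ℕ, (d (n + k) - d n) := Summable.tsum_sub hsc hsd
    _ = 0 := by
        rw [tsum_shift_telescope c k (N + 1) (fun n h => hczero n (Or.inl h))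
            (fun n h => hczero n (Or.inr (by omega))),
          tsum_shift_telescope d k (N + 1) (fun n h => hdzero n (Or.inl h))
            (fun n h => hdzero n (Or.inr (by omega))), sub_self]


/-- For every finite-rank operator `ξ = ∑_{i,j ≤ N} f_{ij} |i⟩⟨j|` and every
integer `m`, the diagonal coefficients of `𝔏_L(ξ) = LξL† − ½L†Lξ − ½ξL†L` satisfy
`∑_n cos(2πmn/k) ⟨n|𝔏_L(ξ)|n⟩ = 0` and `∑_n sin(2πmn/k) ⟨n|𝔏_L(ξ)|n⟩ = 0`. -/
theorem diagonal_invariants_of_lindbladian (k : ℕ) (hk : 1 ≤ k) (α : ℝ) (hα : 0 < α)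
    (N : ℕ) (f : ℕ → ℕ → ℂ) (m : ℤ) (ξ : H →L[ℂ] H)
    (hξ : ξ = ∑ i ∈ Finset.range (N + 1), ∑ j ∈ Finset.range (N + 1), f i j • ketbra i j) :
    (∑' n : ℕ, ((Real.cos (2 * Real.pi * m * n / k) : ℝ) : ℂ) * lindDiag k α ξ n) = 0 ∧
    (∑' n : ℕ, ((Real.sin (2 * Real.pi * m * n / k) : ℝ) : ℂ) * lindDiag k α ξ n) = 0 := by
  have hk0 : (k : ℝ) ≠ 0 := Nat.cast_ne_zero.2 (by omega)
  have harg : ∀ n : ℕ, (2 * Real.pi * m * ((n + k : ℕ) : ℝ) / k)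
      = 2 * Real.pi * m * n / k + m * (2 * Real.pi) := by
    intro n
    push_cast
    field_simp
  constructor
  · exact key_sum k hk α N f ξ hξ (fun n => Real.cos (2 * Real.pi * m * n / k))
      (fun n => by
        show Real.cos (2 * Real.pi * m * ((n + k : ℕ) : ℝ) / k)
          = Real.cos (2 * Real.pi * m * (n : ℝ) / k)
        rw [harg n, Real.cos_add_int_mul_two_pi])
  · exact key_sum k hk α N f ξ hξ (fun n => Real.sin (2 * Real.pi * m * n / k))
      (fun n => by
        show Real.sin (2 * Real.pi * m * ((n + k : ℕ) : ℝ) / k)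
          = Real.sin (2 * Real.pi * m * (n : ℝ) / k)
        rw [harg n, Real.sin_add_int_mul_two_pi])

end
end
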